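/- Let G be a simple graph with a node-type map Φ from its vertices to a type set T, let v be a vertex of G, and let h = ((a_0, τ_0), …, (a_l, τ_l)) be a heterogeneous anonymous walk sequence of length l over T. Let H(h) be the simple graph with vertex set {a_0, …, a_l} ⊆ ℕ, edge set {{a_i, a_{i+1}} : 0 ≤ i < l}, and type map sending a_i to τ_i. Then h is the heterogeneous anonymous walk of some walk of length l in G starting at v if and only if there exists an injective graph homomorphism σ from H(h) into G with σ(0) = v and Φ(σ(x)) equal to the type of x in H(h) for every vertex x of H(h). -/

import Mathlib

/-- An anonymous walk sequence of length `l`. -/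
def IsAWS (l : ℕ) (a : Fin (l + 1) → ℕ) : Prop :=
  a 0 = 0 ∧
  (∀ i : Fin l, a i.succ ≠ a i.castSucc) ∧
  (∀ i : Fin l, a i.succ ≤ 1 + (Finset.Iic i.castSucc).sup a)

/-- The first index at which the value `g i` occurs in `g`. -/
def firstOcc {n : ℕ} {α : Type*} [DecidableEq α] (g : Fin n → α) (i : Fin n) : Fin n :=
  (Finset.univ.filter fun j => g j = g i).min' ⟨i, by simp⟩

/-- The anonymization of `g` at `i`: the number of distinct values of `g` occurring
strictly before the first occurrence of `g i`. -/
def anonymize {n : ℕ} {α : Type*} [DecidableEq α] (g : Fin n → α) (i : Fin n) : ℕ :=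
  ((Finset.univ.filter fun j => j < firstOcc g i).image g).card

/-- The graph `H(h)` reconstructed from a heterogeneous anonymous walk sequence with
underlying anonymous walk sequence `a`: vertex set `{a_0, …, a_l} ⊆ ℕ` and
edge set `{{a_i, a_{i+1}} : 0 ≤ i < l}`. -/
def hawGraph (l : ℕ) (a : Fin (l + 1) → ℕ) : SimpleGraph (Set.range a) :=
  SimpleGraph.induce (Set.range a)
    (SimpleGraph.fromEdgeSet {e : Sym2 ℕ | ∃ i : Fin l, e = s(a i.castSucc, a i.succ)})

section Helpers

variable {n : ℕ} {α β : Type*} [DecidableEq α] [DecidableEq β] (g : Fin n → α)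

lemma firstOcc_spec (i : Fin n) : g (firstOcc g i) = g i := by
  have := Finset.min'_mem (Finset.univ.filter fun j => g j = g i) ⟨i, by simp⟩
  simpa [firstOcc] using this

lemma firstOcc_min (i j : Fin n) (h : g j = g i) : firstOcc g i ≤ j :=
  Finset.min'_le _ _ (by simp [h])

lemma firstOcc_congr (i j : Fin n) (h : g i = g j) : firstOcc g i = firstOcc g j := by
  unfold firstOcc; congr 1; ext k; simp [h]

lemma firstOcc_firstOcc (i : Fin n) : firstOcc g (firstOcc g i) = firstOcc g i :=
  (firstOcc_congr g _ _ (firstOcc_spec g i)).symm ▸ rfl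

lemma anonymize_eq_of_eq (i j : Fin n) (h : g i = g j) : anonymize g i = anonymize g j := by
  unfold anonymize; rw [firstOcc_congr g i j h]

lemma anonymize_lt (i j : Fin n) (h : firstOcc g i < firstOcc g j) :
    anonymize g i < anonymize g j := by
  unfold anonymize
  refine Finset.card_lt_card ⟨Finset.image_subset_image ?_, ?_⟩
  · intro x hx
    simp only [Finset.mem_filter, Finset.mem_univ, true_and] at *
    exact lt_trans hx h
  · intro hsub
    have hmem : g i ∈ (Finset.univ.filter fun j' => j' < firstOcc g j).image g := by
      refine Finset.mem_image.mpr ⟨firstOcc g i, by simpa using h, firstOcc_spec g i⟩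
    have := hsub hmem
    obtain ⟨m, hm, hgm⟩ := Finset.mem_image.mp this
    simp only [Finset.mem_filter, Finset.mem_univ, true_and] at hm
    exact absurd (firstOcc_min g i m hgm) (not_le.mpr hm)

lemma anonymize_inj (i j : Fin n) : anonymize g i = anonymize g j ↔ g i = g j := by
  constructor
  · intro h
    rcases lt_trichotomy (firstOcc g i) (firstOcc g j) with hlt | heq | hgt
    · exact absurd h (ne_of_lt (anonymize_lt g i j hlt))
    · rw [← firstOcc_spec g i, ← firstOcc_spec g j, heq]
    · exact absurd h.symm (ne_of_lt (anonymize_lt g j i hgt))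
  · exact anonymize_eq_of_eq g i j

lemma card_image_congr {γ δ ι : Type*} [DecidableEq γ] [DecidableEq δ] (s : Finset ι)
    (f : ι → γ) (h : ι → δ) (H : ∀ x ∈ s, ∀ y ∈ s, f x = f y ↔ h x = h y) :
    (s.image f).card = (s.image h).card := by
  classical
  refine Finset.card_bij (fun b hb => h (Finset.mem_image.mp hb).choose) ?_ ?_ ?_
  · intro b hb
    exact Finset.mem_image_of_mem h (Finset.mem_image.mp hb).choose_spec.1
  · intro b1 hb1 b2 hb2 heq
    obtain ⟨hx1, hf1⟩ := (Finset.mem_image.mp hb1).choose_spec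
    obtain ⟨hx2, hf2⟩ := (Finset.mem_image.mp hb2).choose_spec
    rw [← hf1, ← hf2]
    exact (H _ hx1 _ hx2).mpr heq
  · intro c hc
    obtain ⟨x, hx, rfl⟩ := Finset.mem_image.mp hc
    refine ⟨f x, Finset.mem_image_of_mem f hx, ?_⟩
    obtain ⟨hx', hf'⟩ := (Finset.mem_image.mp (Finset.mem_image_of_mem f hx)).choose_spec
    exact (H _ hx' _ hx).mp hf'

lemma anonymize_congr (g' : Fin n → β) (H : ∀ i j, g i = g j ↔ g' i = g' j) (i : Fin n) :
    anonymize g i = anonymize g' i := by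
  have hfo : firstOcc g i = firstOcc g' i := by
    unfold firstOcc; congr 1; ext j; simpa using H j i
  unfold anonymize
  rw [hfo]
  exact card_image_congr _ g g' (fun x _ y _ => H x y)

end Helpers

lemma aws_image {l : ℕ} {a : Fin (l + 1) → ℕ} (ha : IsAWS l a) :
    ∀ (m : ℕ) (hm : m < l + 1),
      (Finset.Iic (⟨m, hm⟩ : Fin (l + 1))).image a =
        Finset.range ((Finset.Iic (⟨m, hm⟩ : Fin (l + 1))).sup a + 1) := by
  intro m
  induction m with
  | zero =>
    intro hm
    have h0 : (⟨0, hm⟩ : Fin (l + 1)) = 0 := rfl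
    rw [h0]
    have : Finset.Iic (0 : Fin (l + 1)) = {0} := by
      ext j; simp only [Finset.mem_Iic, Finset.mem_singleton, Fin.le_def, Fin.ext_iff, Fin.val_zero]; omega
    rw [this]
    simp [ha.1]
  | succ m ih =>
    intro hm
    have hm' : m < l + 1 := Nat.lt_of_succ_lt hm
    have hml : m < l := Nat.succ_lt_succ_iff.mp hm
    have hins : Finset.Iic (⟨m + 1, hm⟩ : Fin (l + 1)) =
        insert ⟨m + 1, hm⟩ (Finset.Iic (⟨m, hm'⟩ : Fin (l + 1))) := by
      ext j
      simp only [Finset.mem_Iic, Finset.mem_insert, Fin.le_def, Fin.ext_iff]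
      omega
    set s := (Finset.Iic (⟨m, hm'⟩ : Fin (l + 1))).sup a with hs
    have hbound : a ⟨m + 1, hm⟩ ≤ 1 + s := by
      have := ha.2.2 ⟨m, hml⟩
      simpa [Fin.succ, Fin.castSucc, Fin.castAdd, Fin.castLE] using this
    rw [hins, Finset.image_insert, Finset.sup_insert, ih hm']
    rcases Nat.lt_or_ge (a ⟨m + 1, hm⟩) (s + 1) with hlt | hge
    · have hmax : a ⟨m + 1, hm⟩ ⊔ s = s := by omega
      rw [hmax, Finset.insert_eq_self.mpr (Finset.mem_range.mpr hlt)]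
    · have heq : a ⟨m + 1, hm⟩ = s + 1 := by omega
      have hmax : a ⟨m + 1, hm⟩ ⊔ s = s + 1 := by omega
      rw [hmax, heq, ← Finset.range_add_one]

lemma aws_anonymize {l : ℕ} {a : Fin (l + 1) → ℕ} (ha : IsAWS l a) (i : Fin (l + 1)) :
    anonymize a i = a i := by
  set k := firstOcc a i with hk
  have hak : a k = a i := firstOcc_spec a i
  have hfk : firstOcc a k = k := firstOcc_firstOcc a i
  have h1 : anonymize a i = anonymize a k := anonymize_eq_of_eq a i k hak.symm
  rw [h1, ← hak]
  -- goal: anonymize a k = a k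
  rcases Nat.eq_zero_or_pos k.val with h0 | hpos
  · have hk0 : k = 0 := Fin.ext h0
    have : (Finset.univ.filter fun j => j < firstOcc a k) = ∅ := by
      ext j
      simp only [Finset.mem_filter, Finset.mem_univ, true_and, Finset.notMem_empty,
        iff_false]
      rw [hfk, hk0]
      exact not_lt.mpr (Fin.zero_le j)
    rw [anonymize, this, Finset.image_empty, Finset.card_empty, hk0]
    exact ha.1.symm
  · obtain ⟨m, hmk⟩ : ∃ m, k.val = m + 1 := ⟨k.val - 1, by omega⟩
    have hm' : m < l + 1 := by omega
    have hml : m < l := by have := k.isLt; omega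
    have hfilter : (Finset.univ.filter fun j => j < firstOcc a k) =
        Finset.Iic (⟨m, hm'⟩ : Fin (l + 1)) := by
      ext j
      simp only [Finset.mem_filter, Finset.mem_univ, true_and, Finset.mem_Iic, hfk,
        Fin.lt_def, Fin.le_def]
      omega
    have hkeq : k = ⟨m + 1, by omega⟩ := Fin.ext hmk
    set s := (Finset.Iic (⟨m, hm'⟩ : Fin (l + 1))).sup a with hs
    have himg := aws_image ha m hm'
    rw [anonymize, hfilter, himg, Finset.card_range]
    -- goal: s + 1 = a k
    have hbound : a k ≤ 1 + s := by
      have := ha.2.2 ⟨m, hml⟩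
      rw [hkeq]
      simpa [Fin.succ, Fin.castSucc, Fin.castAdd, Fin.castLE] using this
    have hnotmem : a k ∉ Finset.range (s + 1) := by
      rw [← himg]
      intro hmem
      obtain ⟨j, hj, hja⟩ := Finset.mem_image.mp hmem
      have hle : firstOcc a k ≤ j := firstOcc_min a k j hja
      rw [hfk, hkeq] at hle
      have h1 : m + 1 ≤ (j : ℕ) := hle
      have h2' : j ≤ (⟨m, hm'⟩ : Fin (l + 1)) := Finset.mem_Iic.mp hj
      have h2 : (j : ℕ) ≤ m := h2'
      omega
    rw [Finset.mem_range] at hnotmem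
    omega

/-- A heterogeneous anonymous walk sequence `h = ((a_0, τ_0), …, (a_l, τ_l))` is the
heterogeneous anonymous walk of some walk of length `l` in `G` starting at `v` iff there is
an injective graph homomorphism `σ` from `H(h)` into `G` with `σ 0 = v` that matches the
type map of `H(h)` with `Φ`. -/
theorem haw_realizable_iff {V T : Type*} [DecidableEq V] (G : SimpleGraph V) (Φ : V → T)
    (v : V) (l : ℕ) (a : Fin (l + 1) → ℕ) (τs : Fin (l + 1) → T)
    (ha : IsAWS l a) (hcompat : ∀ i j, a i = a j → τs i = τs j) :
    (∃ w : Fin (l + 1) → V, w 0 = v ∧ (∀ i : Fin l, G.Adj (w i.castSucc) (w i.succ)) ∧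
      (∀ i, anonymize w i = a i) ∧ (∀ i, Φ (w i) = τs i)) ↔
    (∃ σ : hawGraph l a →g G, Function.Injective σ ∧
      σ ⟨(0 : ℕ), ⟨0, ha.1⟩⟩ = v ∧ ∀ i : Fin (l + 1), Φ (σ ⟨a i, ⟨i, rfl⟩⟩) = τs i) := by
  constructor
  · rintro ⟨w, hw0, hadj, hwa, hwt⟩
    have hwd : ∀ i j, a i = a j → w i = w j := fun i j h =>
      (anonymize_inj w i j).mp (by rw [hwa i, hwa j, h])
    have hwd' : ∀ i j, w i = w j → a i = a j := fun i j h => by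
      rw [← hwa i, ← hwa j]; exact anonymize_eq_of_eq w i j h
    let σf : Set.range a → V := fun x => w x.2.choose
    have key : ∀ (x : Set.range a) (i : Fin (l + 1)), a i = x.val → σf x = w i :=
      fun x i h => hwd _ _ (x.2.choose_spec.trans h.symm)
    have hmr : ∀ {x y : Set.range a}, (hawGraph l a).Adj x y → G.Adj (σf x) (σf y) := by
      intro x y hxy
      obtain ⟨⟨i, hi⟩, hne⟩ :
          (s((x : ℕ), (y : ℕ)) ∈ {e : Sym2 ℕ | ∃ i : Fin l, e = s(a i.castSucc, a i.succ)})
            ∧ (x : ℕ) ≠ (y : ℕ) := hxy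
      rcases Sym2.eq_iff.mp hi with ⟨h1, h2⟩ | ⟨h1, h2⟩
      · rw [key x i.castSucc h1.symm, key y i.succ h2.symm]
        exact hadj i
      · rw [key x i.succ h1.symm, key y i.castSucc h2.symm]
        exact (hadj i).symm
    refine ⟨⟨σf, hmr⟩, ?_, ?_, ?_⟩
    · intro x y h
      apply Subtype.ext
      rw [← x.2.choose_spec, ← y.2.choose_spec]
      exact hwd' _ _ h
    · show σf ⟨(0 : ℕ), ⟨0, ha.1⟩⟩ = v
      rw [key ⟨(0 : ℕ), ⟨0, ha.1⟩⟩ 0 ha.1, hw0]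
    · intro i
      show Φ (σf ⟨a i, ⟨i, rfl⟩⟩) = τs i
      rw [key ⟨a i, ⟨i, rfl⟩⟩ i rfl]
      exact hwt i
  · rintro ⟨σ, hinj, hσ0, hτ⟩
    refine ⟨fun i => σ ⟨a i, ⟨i, rfl⟩⟩, ?_, ?_, ?_, ?_⟩
    · have h : (⟨a 0, ⟨0, rfl⟩⟩ : Set.range a) = ⟨(0 : ℕ), ⟨0, ha.1⟩⟩ := Subtype.ext ha.1
      show σ ⟨a 0, ⟨0, rfl⟩⟩ = v
      rw [h]; exact hσ0
    · intro i
      apply σ.map_adj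
      show (s(a i.castSucc, a i.succ) ∈
          {e : Sym2 ℕ | ∃ j : Fin l, e = s(a j.castSucc, a j.succ)})
        ∧ a i.castSucc ≠ a i.succ
      exact ⟨⟨i, rfl⟩, (ha.2.1 i).symm⟩
    · intro i
      have hpat : ∀ i' j' : Fin (l + 1),
          σ ⟨a i', ⟨i', rfl⟩⟩ = σ ⟨a j', ⟨j', rfl⟩⟩ ↔ a i' = a j' := by
        intro i j
        constructor
        · intro h
          exact congrArg Subtype.val (hinj h)
        · intro h
          exact congrArg σ (Subtype.ext h)
      rw [anonymize_congr _ a hpat i]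
      exact aws_anonymize ha i
    · exact hτ
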